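/- arXiv:2410.11942 — 4 statements merged into one kernel-verified Lean document; each statement's English description precedes it below -/
import Mathlib

section
/- Let S ⊆ P satisfy S^Ω = S, and let π be a truncation of P. Define the bulk stabilizers S_B = S ∩ π(P) and the truncated stabilizers S_T = π(S). Then S_B = S_T^Ω ∩ π(P): the set of elements of π(P) commuting with all truncated stabilizers is exactly the set of bulk stabilizers. -/
/-- `P = ⊕_{i∈I} (ℤ_d)²` with the symplectic pairing
`Ω(a,b) = Σ_i (a_i^X b_i^Z − a_i^Z b_i^X)`. -/
noncomputable def Omega {I : Type*} {d : ℕ} (a b : I →₀ ZMod d × ZMod d) : ZMod d :=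
  a.sum fun i v => v.1 * (b i).2 - v.2 * (b i).1

/-- The commutant `A^Ω = {c ∈ P : Ω(c,a) = 0 for all a ∈ A}`. -/
def commutant {I : Type*} {d : ℕ} (A : Set (I →₀ ZMod d × ZMod d)) :
    Set (I →₀ ZMod d × ZMod d) :=
  {c | ∀ a ∈ A, Omega c a = 0}

lemma Omega_eq_sum {I : Type*} [DecidableEq I] {d : ℕ} (a b : I →₀ ZMod d × ZMod d) :
    Omega a b = ∑ i ∈ a.support ∪ b.support, ((a i).1 * (b i).2 - (a i).2 * (b i).1) := by
  unfold Omega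
  rw [Finsupp.sum_of_support_subset a Finset.subset_union_left]
  intro i _
  simp

lemma Omega_skew {I : Type*} [DecidableEq I] {d : ℕ} (a b : I →₀ ZMod d × ZMod d) :
    Omega a b = -Omega b a := by
  rw [Omega_eq_sum, Omega_eq_sum, Finset.union_comm, ← Finset.sum_neg_distrib]
  exact Finset.sum_congr rfl fun i _ => by ring

lemma Omega_add_right {I : Type*} {d : ℕ} (a b c : I →₀ ZMod d × ZMod d) :
    Omega a (b + c) = Omega a b + Omega a c := by
  unfold Omega Finsupp.sum
  rw [← Finset.sum_add_distrib]
  refine Finset.sum_congr rfl fun i _ => ?_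
  simp only [Finsupp.add_apply, Prod.fst_add, Prod.snd_add]
  ring

/-- For a topological stabilizer group `S` (with `S^Ω = S`) and a truncation `π`,
the bulk stabilizers `S_B = S ∩ π(P)` coincide with `S_T^Ω ∩ π(P)`, where
`S_T = π(S)` are the truncated stabilizers. -/
theorem bulk_eq_truncated_commutant {I : Type*} {d : ℕ}
    (S : AddSubgroup (I →₀ ZMod d × ZMod d))
    (hS : commutant (S : Set (I →₀ ZMod d × ZMod d)) = (S : Set (I →₀ ZMod d × ZMod d)))
    (π : (I →₀ ZMod d × ZMod d) →+ (I →₀ ZMod d × ZMod d))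
    (hproj : ∀ x, π (π x) = π x)
    (horth : ∀ x, π x = 0 → ∀ y ∈ Set.range π, Omega x y = 0) :
    (S : Set (I →₀ ZMod d × ZMod d)) ∩ Set.range π =
      commutant (π '' (S : Set (I →₀ ZMod d × ZMod d))) ∩ Set.range π := by
  classical
  have key : ∀ c ∈ Set.range π, ∀ s, Omega c s = Omega c (π s) := by
    intro c hc s
    have h0 : π (s - π s) = 0 := by
      rw [map_sub, hproj, sub_self]
    have h1 : Omega c (s - π s) = 0 := by
      rw [Omega_skew, horth _ h0 c hc, neg_zero]
    have : Omega c s = Omega c (π s + (s - π s)) := by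
      congr 1; abel
    rw [this, Omega_add_right, h1, add_zero]
  ext c
  constructor
  · rintro ⟨hcS, hcr⟩
    refine ⟨?_, hcr⟩
    rintro a ⟨s, hs, rfl⟩
    have hcc : c ∈ commutant (S : Set (I →₀ ZMod d × ZMod d)) := by rw [hS]; exact hcS
    rw [← key c hcr s]
    exact hcc s hs
  · rintro ⟨hcc, hcr⟩
    refine ⟨?_, hcr⟩
    rw [← hS]
    intro s hs
    rw [key c hcr s]
    exact hcc (π s) ⟨s, hs, rfl⟩
end

section
/- A formal Laurent series f(x) = Σ_{i≥−k} a_i x^i with coefficients a_i ∈ ℤ_d is a unit in the ring ℤ_d((x)) if and only if the ideal of ℤ_d generated by the coefficients {a_i} is all of ℤ_d, i.e. there exist finitely many m_i ∈ ℤ_d with Σ m_i a_i ≡ 1 (mod d). -/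
open HahnSeries

noncomputable def LSmapRH {R S : Type*} [CommRing R] [CommRing S] (f : R →+* S) :
    HahnSeries ℤ R →+* HahnSeries ℤ S where
  toFun x := x.map f
  map_one' := HahnSeries.map_one f.toMonoidWithZeroHom
  map_mul' x y := HahnSeries.map_mul (f : R →ₙ+* S)
  map_zero' := by ext g; simp
  map_add' x y := HahnSeries.map_add (f : R →+ S)

lemma LSmapRH_coeff {R S : Type*} [CommRing R] [CommRing S] (f : R →+* S)
    (x : HahnSeries ℤ R) (g : ℤ) : (LSmapRH f x).coeff g = f (x.coeff g) := rfl

lemma LSmapRH_surj {R S : Type*} [CommRing R] [CommRing S] (f : R →+* S)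
    (hf : Function.Surjective f) : Function.Surjective (LSmapRH f) := by
  classical
  intro y
  refine ⟨⟨fun g => if y.coeff g = 0 then 0 else Classical.choose (hf (y.coeff g)), ?_⟩, ?_⟩
  · apply y.isPWO_support.mono
    intro g hg
    simp only [Function.mem_support, ne_eq] at hg ⊢
    intro h
    exact hg (by simp [h])
  · ext g
    rw [LSmapRH_coeff]
    by_cases h : y.coeff g = 0
    · simp [h]
    · simp only [h, if_neg h]
      exact Classical.choose_spec (hf (y.coeff g))

/-- A formal Laurent series `f ∈ ℤ_d((x))` is a unit if and only if the ideal of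
`ℤ_d` generated by its coefficients is all of `ℤ_d` (equivalently, some finite
`ℤ_d`-linear combination of the coefficients equals `1`). -/
theorem laurentSeries_isUnit_iff_coeff_span (d : ℕ) (hd : 0 < d)
    (f : LaurentSeries (ZMod d)) :
    IsUnit f ↔ Ideal.span {r : ZMod d | ∃ i : ℤ, f.coeff i = r} = ⊤ := by
  haveI : NeZero d := ⟨hd.ne'⟩
  classical
  constructor
  · rintro ⟨u, rfl⟩
    rw [Ideal.eq_top_iff_one]
    have h1 : ((u : LaurentSeries (ZMod d)) * (↑u⁻¹ : LaurentSeries (ZMod d))).coeff 0 = 1 := by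
      rw [u.mul_inv]
      simp [HahnSeries.coeff_one]
    rw [HahnSeries.coeff_mul] at h1
    rw [← h1]
    exact Ideal.sum_mem _ fun ij hij =>
      Ideal.mul_mem_right _ _ (Ideal.subset_span ⟨ij.1, rfl⟩)
  · intro hspan
    by_contra hf
    obtain ⟨M, hM, hfM⟩ := Ideal.exists_le_maximal (Ideal.span {f})
      (by rwa [Ne, Ideal.span_singleton_eq_top])
    have hfM' : f ∈ M := hfM (Ideal.subset_span rfl)
    set p := M.comap (HahnSeries.C : ZMod d →+* LaurentSeries (ZMod d)) with hp
    haveI hMprime := hM.isPrime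
    haveI hpprime : p.IsPrime := Ideal.IsPrime.comap _
    haveI hpmax : p.IsMaximal := IsArtinianRing.isMaximal_of_isPrime p
    letI : Field (ZMod d ⧸ p) := Ideal.Quotient.field p
    set φ := LSmapRH (Ideal.Quotient.mk p) with hφ
    have hsurj : Function.Surjective φ := LSmapRH_surj _ Ideal.Quotient.mk_surjective
    haveI hkermax : (RingHom.ker φ).IsMaximal := RingHom.ker_isMaximal_of_surjective φ hsurj
    haveI : IsPrincipalIdealRing (ZMod d) :=
      IsPrincipalIdealRing.of_surjective (Int.castRingHom (ZMod d)) ZMod.intCast_surjective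
    obtain ⟨c, hc⟩ := (IsPrincipalIdealRing.principal p).principal
    have hcM : HahnSeries.C c ∈ M := by
      have : c ∈ p := hc ▸ Ideal.subset_span rfl
      exact this
    have hker_le : RingHom.ker φ ≤ M := by
      intro g hg
      have hcoeffs : ∀ i : ℤ, ∃ b : ZMod d, b * c = g.coeff i := by
        intro i
        have h0 : (φ g).coeff i = 0 := by rw [RingHom.mem_ker.mp hg]; rfl
        rw [LSmapRH_coeff] at h0
        have : g.coeff i ∈ p := Ideal.Quotient.eq_zero_iff_mem.mp h0
        rw [hc] at this
        exact Ideal.mem_span_singleton'.mp this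
      set h : LaurentSeries (ZMod d) :=
        ⟨fun i => if g.coeff i = 0 then 0 else Classical.choose (hcoeffs i), by
          apply g.isPWO_support.mono
          intro i hi
          simp only [Function.mem_support, ne_eq] at hi ⊢
          intro h0
          exact hi (by simp [h0])⟩ with hh
      have hgh : g = h * HahnSeries.C c := by
        ext i
        rw [HahnSeries.C_apply, HahnSeries.coeff_mul_single_zero]
        show g.coeff i = (if g.coeff i = 0 then 0 else Classical.choose (hcoeffs i)) * c
        by_cases h0 : g.coeff i = 0
        · simp [h0]
        · rw [if_neg h0, Classical.choose_spec (hcoeffs i)]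
      rw [hgh]
      exact Ideal.mul_mem_left _ _ hcM
    have hMk : M = RingHom.ker φ := (hkermax.eq_of_le hM.ne_top hker_le).symm
    have hfker : ∀ i : ℤ, f.coeff i ∈ p := by
      intro i
      have : φ f = 0 := RingHom.mem_ker.mp (hMk ▸ hfM')
      have h0 : (φ f).coeff i = 0 := by rw [this]; rfl
      rw [LSmapRH_coeff] at h0
      exact Ideal.Quotient.eq_zero_iff_mem.mp h0
    have hle : (⊤ : Ideal (ZMod d)) ≤ p := by
      rw [← hspan]
      exact Ideal.span_le.mpr (by rintro r ⟨i, rfl⟩; exact hfker i)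
    exact hpprime.ne_top (top_le_iff.mp hle)
end

section
/- Let P = ⊕_{i∈I}(ℤ_d)² and P̂ = Π_{i∈I}(ℤ_d)², with the pairing Ω̂ : P̂ × P → ℤ_d given by the (finite) sum of sitewise symplectic forms. For a subgroup A ⊆ P̂, let A^⊥ = {c ∈ P : Ω̂(a,c) = 0 ∀a ∈ A} and for M ⊆ P let M^⊥ = {ĉ ∈ P̂ : Ω̂(ĉ,m) = 0 ∀m ∈ M}. Then for any subgroup A ⊆ P̂ whose elements all have finite support (i.e. A ⊆ P viewed inside P̂), the double commutant A^{⊥⊥} equals the closure Â of A in P̂, i.e. the set of all (possibly infinite, sitewise well-defined) products of elements of A. Concretely, ĉ ∈ A^{⊥⊥} if and only if for every finite region Γ ⊆ I there exists a_Γ ∈ A with π_Γ(a_Γ) = π_Γ(ĉ). -/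
/-- The pairing `Ω̂ : P̂ × P → ℤ_d`: for `c : I → (ℤ_d)²` (possibly infinite support)
and `m : I →₀ (ℤ_d)²` (finite support), the finite sum of sitewise symplectic forms. -/
noncomputable def OmegaHat {I : Type*} {d : ℕ} (c : I → ZMod d × ZMod d)
    (m : I →₀ ZMod d × ZMod d) : ZMod d :=
  m.sum fun i v => (c i).1 * v.2 - (c i).2 * v.1

/-- For `N ⊆ P̂`, `N^⊥ = {c ∈ P : Ω̂(n,c) = 0 ∀ n ∈ N}`. -/
def perpDown {I : Type*} {d : ℕ} (N : Set (I → ZMod d × ZMod d)) :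
    Set (I →₀ ZMod d × ZMod d) :=
  {c | ∀ n ∈ N, OmegaHat n c = 0}

/-- For `M ⊆ P`, `M^⊥ = {ĉ ∈ P̂ : Ω̂(ĉ,m) = 0 ∀ m ∈ M}`. -/
def perpUp {I : Type*} {d : ℕ} (M : Set (I →₀ ZMod d × ZMod d)) :
    Set (I → ZMod d × ZMod d) :=
  {c | ∀ m ∈ M, OmegaHat c m = 0}

/- ### Auxiliary material -/

/-- The embedding `ℤ →+ ℚ/ℤ`, `k ↦ k/d`. -/
noncomputable def intDivQ (d : ℕ) : ℤ →+ ℚ :=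
  AddMonoidHom.mk' (fun k => (k : ℚ) / d) (by
    intro a b
    push_cast
    rw [add_div])

noncomputable def intDiv (d : ℕ) : ℤ →+ AddCircle (1 : ℚ) :=
  (QuotientAddGroup.mk' (AddSubgroup.zmultiples (1 : ℚ))).comp (intDivQ d)

/-- The embedding `ZMod d →+ ℚ/ℤ`, `z ↦ z/d`. -/
noncomputable def zmodToCircle (d : ℕ) [NeZero d] : ZMod d →+ AddCircle (1 : ℚ) :=
  ZMod.lift d ⟨intDiv d, by
    have hd : (d : ℚ) ≠ 0 := Nat.cast_ne_zero.mpr (NeZero.ne d)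
    show (((d : ℤ) : ℚ) / d : ℚ) = (0 : AddCircle (1 : ℚ))
    rw [show (((d : ℤ) : ℚ) / d : ℚ) = 1 by push_cast; field_simp]
    exact AddCircle.coe_period 1⟩

lemma zmodToCircle_intCast (d : ℕ) [NeZero d] (k : ℤ) :
    zmodToCircle d (k : ZMod d) = ((k : ℚ) / d : ℚ) :=
  ZMod.lift_coe d _ k

lemma zmodToCircle_injective (d : ℕ) [NeZero d] :
    Function.Injective (zmodToCircle d) := by
  have hd : (0 : ℚ) < d := by
    exact_mod_cast Nat.pos_of_ne_zero (NeZero.ne d)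
  have hd' : (d : ℚ) ≠ 0 := ne_of_gt hd
  intro a b hab
  have h : zmodToCircle d (a - b) = 0 := by rw [map_sub, hab, sub_self]
  have hz : a - b = 0 := by
    set z := a - b with hzdef
    have hv : z = ((z.val : ℤ) : ZMod d) := by simp [ZMod.natCast_val, ZMod.intCast_cast]
    rw [hv, zmodToCircle_intCast] at h
    rw [AddCircle.coe_eq_zero_iff] at h
    obtain ⟨n, hn⟩ := h
    rw [zsmul_eq_mul, mul_one] at hn
    have hval : ((z.val : ℤ) : ℚ) = n * d := ((eq_div_iff hd').mp hn).symm
    have h0 : (0 : ℚ) ≤ (n : ℚ) * d := by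
      rw [← hval]; exact_mod_cast Int.ofNat_nonneg z.val
    have h1 : (n : ℚ) * d < d := by
      rw [← hval]; exact_mod_cast ZMod.val_lt z
    have hn0 : n = 0 := by
      rcases lt_trichotomy n 0 with hcase | hcase | hcase
      · exfalso
        have : (n : ℚ) ≤ -1 := by exact_mod_cast (by omega : n ≤ -1)
        nlinarith
      · exact hcase
      · exfalso
        have : (1 : ℚ) ≤ (n : ℚ) := by exact_mod_cast hcase
        nlinarith
    have hz0 : ((z.val : ℤ) : ℚ) = 0 := by rw [hval, hn0]; simp
    have : z.val = 0 := by exact_mod_cast hz0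
    rw [hv, this]; simp
  rwa [sub_eq_zero] at hz

lemma zmodToCircle_surj_torsion (d : ℕ) [NeZero d] (x : AddCircle (1 : ℚ))
    (hx : d • x = 0) : ∃ z : ZMod d, zmodToCircle d z = x := by
  have hd : (d : ℚ) ≠ 0 := Nat.cast_ne_zero.mpr (NeZero.ne d)
  obtain ⟨q, rfl⟩ := QuotientAddGroup.mk_surjective x
  have hq : ((d • q : ℚ) : AddCircle (1 : ℚ)) = 0 := by
    rw [← hx]; exact (QuotientAddGroup.mk_nsmul _ _ _).symm
  rw [AddCircle.coe_eq_zero_iff] at hq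
  obtain ⟨n, hn⟩ := hq
  refine ⟨(n : ZMod d), ?_⟩
  rw [zmodToCircle_intCast]
  congr 1
  rw [zsmul_eq_mul, mul_one, nsmul_eq_mul] at hn
  field_simp
  linarith [hn]

/-- Key duality lemma: in a `ZMod d`-module, a point outside a subgroup is separated
from it by a `ZMod d`-valued character. -/
lemma exists_zmod_char {d : ℕ} [NeZero d] {G : Type*} [AddCommGroup G]
    [Module (ZMod d) G] (B : AddSubgroup G) {x : G} (hx : x ∉ B) :
    ∃ φ : G →+ ZMod d, (∀ b ∈ B, φ b = 0) ∧ φ x ≠ 0 := by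
  have hGtor : ∀ g : G, d • g = 0 := by
    intro g
    rw [← Nat.cast_smul_eq_nsmul (ZMod d), ZMod.natCast_self, zero_smul]
  set mk := QuotientAddGroup.mk' B with hmk
  have hxq : mk x ≠ 0 := by
    rw [hmk, QuotientAddGroup.mk'_apply]
    exact fun h0 => hx ((QuotientAddGroup.eq_zero_iff x).mp h0)
  obtain ⟨χ, hχ⟩ := CharacterModule.exists_character_apply_ne_zero_of_ne_zero hxq
  have hQtor : ∀ q : G ⧸ B, d • q = 0 := by
    intro q
    obtain ⟨g, rfl⟩ := QuotientAddGroup.mk_surjective q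
    rw [← QuotientAddGroup.mk_nsmul, hGtor g]
    rfl
  have htor : ∀ q : G ⧸ B, d • (χ q) = 0 := by
    intro q; rw [← map_nsmul, hQtor, map_zero]
  choose f hf using fun q => zmodToCircle_surj_torsion d (χ q) (htor q)
  have hinj := zmodToCircle_injective d
  let ψ : (G ⧸ B) →+ ZMod d := AddMonoidHom.mk' f (by
    intro a b
    apply hinj
    rw [map_add, hf, hf, hf, map_add])
  refine ⟨ψ.comp mk, ?_, ?_⟩
  · intro b hb
    have : mk b = 0 := (QuotientAddGroup.eq_zero_iff b).mpr hb
    simp [this]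
  · intro h0
    apply hχ
    have : zmodToCircle d (ψ (mk x)) = χ (mk x) := hf (mk x)
    rw [show ψ (mk x) = 0 from h0, map_zero] at this
    exact this.symm

/-- The sitewise symplectic form, as an additive hom in the second variable. -/
def siteForm {d : ℕ} (w : ZMod d × ZMod d) : (ZMod d × ZMod d) →+ ZMod d :=
  AddMonoidHom.mk' (fun v => w.1 * v.2 - w.2 * v.1) (by
    intro a b
    simp only [Prod.fst_add, Prod.snd_add]
    ring)

/-- `OmegaHat c` as an additive hom. -/
noncomputable def OmegaHom {I : Type*} {d : ℕ} (c : I → ZMod d × ZMod d) :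
    (I →₀ ZMod d × ZMod d) →+ ZMod d :=
  Finsupp.liftAddHom (fun i => siteForm (c i))

lemma OmegaHat_eq_hom {I : Type*} {d : ℕ} (c : I → ZMod d × ZMod d)
    (m : I →₀ ZMod d × ZMod d) : OmegaHat c m = OmegaHom c m := rfl

/-- For a subgroup `A` of finitely supported elements, viewed inside `P̂`, the double
commutant `A^{⊥⊥}` equals the closure `Â`: the set of `ĉ ∈ P̂` that agree with some
element of `A` on every finite region. -/
theorem double_perp_eq_closure {I : Type*} [Countable I] {d : ℕ} [NeZero d]
    (A : AddSubgroup (I →₀ ZMod d × ZMod d)) :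
    perpUp (perpDown ((fun a : I →₀ ZMod d × ZMod d => (a : I → ZMod d × ZMod d)) ''
        (A : Set (I →₀ ZMod d × ZMod d)))) =
      {c : I → ZMod d × ZMod d | ∀ Γ : Finset I, ∃ a ∈ A, ∀ i ∈ Γ, a i = c i} := by
  classical
  ext c
  constructor
  · -- hard direction
    intro hc Γ
    by_contra hnot
    push_neg at hnot
    -- the restriction map
    let ρ : (I → ZMod d × ZMod d) →+ ({ i // i ∈ Γ } → ZMod d × ZMod d) :=
      AddMonoidHom.mk' (fun g (i : { i // i ∈ Γ }) => g (i : I)) (fun _ _ => rfl)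
    let B : AddSubgroup ({ i // i ∈ Γ } → ZMod d × ZMod d) :=
      A.map (ρ.comp (Finsupp.coeFnAddHom))
    have hx : ρ c ∉ B := by
      intro hmem
      obtain ⟨a, haA, hae⟩ := hmem
      obtain ⟨i, hiΓ, hne⟩ := hnot a haA
      exact hne (congrFun hae ⟨i, hiΓ⟩)
    obtain ⟨φ, hφB, hφx⟩ := exists_zmod_char (d := d) B hx
    -- the witness m
    let v : { i // i ∈ Γ } → (ZMod d × ZMod d) := fun i =>
      (-(φ (Pi.single i ((0 : ZMod d), (1 : ZMod d)))),
        φ (Pi.single i ((1 : ZMod d), (0 : ZMod d))))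
    let m : I →₀ ZMod d × ZMod d := ∑ i : { i // i ∈ Γ }, Finsupp.single (i : I) (v i)
    have hsub : Function.Injective (fun i : { i // i ∈ Γ } => (i : I)) := Subtype.coe_injective
    -- key computation
    have key : ∀ g : I → ZMod d × ZMod d, OmegaHat g m = φ (ρ g) := by
      intro g
      rw [OmegaHat_eq_hom]
      have h1 : OmegaHom g m = ∑ i : { i // i ∈ Γ }, siteForm (g i) (v i) := by
        rw [map_sum]
        refine Finset.sum_congr rfl ?_
        intro i _
        rw [OmegaHom, Finsupp.liftAddHom_apply_single]
      have h2 : ρ g = ∑ i : { i // i ∈ Γ }, Pi.single i (ρ g i) := by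
        funext j
        rw [Finset.sum_apply]
        exact (Fintype.sum_pi_single j (ρ g)).symm
      rw [h1, h2, map_sum]
      refine Finset.sum_congr rfl ?_
      intro i _
      have hdecomp : (Pi.single i (ρ g i) : { i // i ∈ Γ } → ZMod d × ZMod d) =
          (g (i : I)).1 • (Pi.single i ((1 : ZMod d), (0 : ZMod d)) :
            { i // i ∈ Γ } → ZMod d × ZMod d) +
          (g (i : I)).2 • (Pi.single i ((0 : ZMod d), (1 : ZMod d)) :
            { i // i ∈ Γ } → ZMod d × ZMod d) := by
        rw [← Pi.single_smul, ← Pi.single_smul, ← Pi.single_add]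
        ext <;> simp [Prod.smul_def, smul_eq_mul, ρ]
      rw [hdecomp, map_add, ZMod.map_smul, ZMod.map_smul, smul_eq_mul, smul_eq_mul]
      simp only [siteForm, AddMonoidHom.mk'_apply, v]
      ring
    -- m annihilates A
    have hmperp : m ∈ perpDown ((fun a : I →₀ ZMod d × ZMod d =>
        (a : I → ZMod d × ZMod d)) '' (A : Set (I →₀ ZMod d × ZMod d))) := by
      rintro n ⟨a, haA, rfl⟩
      rw [key]
      exact hφB (ρ a) ⟨a, haA, rfl⟩
    have := hc m hmperp
    rw [key] at this
    exact hφx this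
  · -- easy direction
    intro hc m hm
    obtain ⟨a, haA, hag⟩ := hc m.support
    have heq : OmegaHat c m = OmegaHat (a : I → ZMod d × ZMod d) m := by
      unfold OmegaHat Finsupp.sum
      refine Finset.sum_congr rfl ?_
      intro i hi
      dsimp only
      rw [hag i hi]
    rw [heq]
    exact hm _ ⟨a, haA, rfl⟩
end

section
/- A Laurent polynomial r ∈ ℤ_d[y, y^{−1}] is a non-zero-divisor only if the ideal of ℤ_d generated by its coefficients is all of ℤ_d; consequently any non-zero-divisor of ℤ_d[y, y^{−1}] becomes a unit in the formal Laurent series ring ℤ_d((y)). -/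
open HahnSeries

namespace LaurentNZD

variable {m a : ℕ}

/-- Key computation: if `e * a = 0` in `ZMod m` then multiplying by `e` sees `ℕ`-casts
only modulo `a`. -/
lemma emul [NeZero a] (e : ZMod m) (hea : e * ((a : ℕ) : ZMod m) = 0) (t : ℕ) :
    e * (((t : ZMod a)).val : ZMod m) = e * ((t : ℕ) : ZMod m) := by
  conv_rhs => rw [← Nat.div_add_mod t a]
  rw [ZMod.val_natCast]
  push_cast
  rw [mul_add, ← mul_assoc, hea, zero_mul, zero_add]

/-- The multiplicative-additive section `ZMod a → ZMod m` attached to an idempotent `e`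
with `e * a = 0`. -/
def sec (m a : ℕ) [NeZero a] (e : ZMod m) (he : e * e = e)
    (hea : e * ((a : ℕ) : ZMod m) = 0) : ZMod a →ₙ+* ZMod m where
  toFun c := e * ((c.val : ℕ) : ZMod m)
  map_zero' := by simp [ZMod.val_zero]
  map_add' c d := by
    have h : c + d = ((c.val + d.val : ℕ) : ZMod a) := by
      push_cast [ZMod.natCast_zmod_val]
      ring
    show e * _ = e * _ + e * _
    rw [h, emul e hea, Nat.cast_add, mul_add]
  map_mul' c d := by
    have h : c * d = ((c.val * d.val : ℕ) : ZMod a) := by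
      push_cast [ZMod.natCast_zmod_val]
      ring
    show e * _ = (e * _) * (e * _)
    rw [h, emul e hea, Nat.cast_mul, mul_mul_mul_comm, he]

lemma sec_apply [NeZero a] (e : ZMod m) (he : e * e = e)
    (hea : e * ((a : ℕ) : ZMod m) = 0) (c : ZMod a) :
    sec m a e he hea c = e * ((c.val : ℕ) : ZMod m) := rfl

lemma sec_map_one [NeZero m] (ha : 1 < a) (e : ZMod m) (he : e * e = e)
    (hea : e * ((a : ℕ) : ZMod m) = 0) :
    haveI : NeZero a := ⟨by omega⟩
    (1 : HahnSeries ℤ (ZMod a)).map (sec m a e he hea) = HahnSeries.single 0 e := by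
  haveI : NeZero a := ⟨by omega⟩
  haveI : Fact (1 < a) := ⟨ha⟩
  ext g
  by_cases hg : g = 0 <;>
    simp [hg, HahnSeries.coeff_one, HahnSeries.coeff_single, sec_apply, ZMod.val_one,
      ZMod.val_zero]

lemma sec_map_cast [NeZero m] [NeZero a] (h : a ∣ m) (e : ZMod m) (he : e * e = e)
    (hea : e * ((a : ℕ) : ZMod m) = 0) (x : HahnSeries ℤ (ZMod m)) :
    (x.map (ZMod.castHom h (ZMod a))).map (sec m a e he hea)
      = HahnSeries.single 0 e * x := by
  ext g
  rw [HahnSeries.coeff_single_zero_mul]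
  simp only [HahnSeries.map_coeff]
  set c := x.coeff g with hc
  have h1 : ZMod.castHom h (ZMod a) c = ((c.val : ℕ) : ZMod a) := by
    rw [ZMod.castHom_apply, ← ZMod.natCast_val]
  rw [h1, sec_apply, emul e hea, ZMod.natCast_zmod_val]

lemma sec_idem_mul [NeZero m] [NeZero a] (e : ZMod m) (he : e * e = e)
    (hea : e * ((a : ℕ) : ZMod m) = 0) (w : HahnSeries ℤ (ZMod a)) :
    HahnSeries.single 0 e * (w.map (sec m a e he hea)) = w.map (sec m a e he hea) := by
  ext g
  rw [HahnSeries.coeff_single_zero_mul]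
  simp only [HahnSeries.map_coeff, sec_apply]
  rw [← mul_assoc, he]

lemma span_map_top {S : Type*} [CommRing S] (φ : ZMod m →+* S)
    (x : HahnSeries ℤ (ZMod m)) (hx : Ideal.span {c | ∃ i : ℤ, x.coeff i = c} = ⊤) :
    Ideal.span {c : S | ∃ i : ℤ, (x.map φ).coeff i = c} = ⊤ := by
  have hset : {c : S | ∃ i : ℤ, (x.map φ).coeff i = c}
      = φ '' {c | ∃ i : ℤ, x.coeff i = c} := by
    ext c
    constructor
    · rintro ⟨i, rfl⟩; exact ⟨x.coeff i, ⟨i, rfl⟩, rfl⟩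
    · rintro ⟨b, ⟨i, rfl⟩, rfl⟩; exact ⟨i, rfl⟩
  rw [hset, ← Ideal.map_span, hx, Ideal.map_top]

lemma sq_zero {aa : ZMod m} (haa : aa * aa = 0) (n : HahnSeries ℤ (ZMod m))
    (hn : ∀ g : ℤ, aa ∣ n.coeff g) : n * n = 0 := by
  ext g
  rw [HahnSeries.coeff_mul, HahnSeries.coeff_zero]
  apply Finset.sum_eq_zero
  intro ij _
  obtain ⟨u, hu⟩ := hn ij.1
  obtain ⟨v, hv⟩ := hn ij.2
  rw [hu, hv, mul_mul_mul_comm, haa, zero_mul]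

/-- The key lemma: a Laurent series over `ZMod m` whose coefficients generate the unit
ideal is a unit. -/
lemma zmod_unit : ∀ m : ℕ, 0 < m → ∀ x : HahnSeries ℤ (ZMod m),
    Ideal.span {c : ZMod m | ∃ i : ℤ, x.coeff i = c} = ⊤ → IsUnit x := by
  intro m
  induction m using Nat.strong_induction_on with
  | _ m IH =>
  intro hm x hx
  haveI : NeZero m := ⟨hm.ne'⟩
  rcases eq_or_ne m 1 with rfl | hm1
  · haveI : Subsingleton (HahnSeries ℤ (ZMod 1)) :=
      ⟨fun x y => by ext g; exact Subsingleton.elim _ _⟩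
    exact isUnit_of_subsingleton x
  by_cases hprime : m.Prime
  · haveI := Fact.mk hprime
    have hx0 : x ≠ 0 := by
      rintro rfl
      have hset : {c : ZMod m | ∃ i : ℤ, (0 : HahnSeries ℤ (ZMod m)).coeff i = c} = {0} := by
        ext c; simp [eq_comm]
      rw [hset, Ideal.span_singleton_eq_top] at hx
      exact hx.ne_zero rfl
    exact isUnit_iff_ne_zero.mpr hx0
  by_cases hsqf : ∃ p : ℕ, p.Prime ∧ p * p ∣ m
  · -- m has a square factor: reduce modulo m/p, a square-zero kernel
    obtain ⟨p, hp, s, hs⟩ := hsqf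
    set m₀ := m / p with hm0
    have hps : m₀ = p * s := by
      rw [hm0, hs, mul_assoc, Nat.mul_div_cancel_left _ hp.pos]
    have hm0pos : 0 < m₀ := by
      rw [hps]
      have : s ≠ 0 := by rintro rfl; simp [hs] at hm
      exact Nat.mul_pos hp.pos (Nat.pos_of_ne_zero this)
    have hm0lt : m₀ < m := Nat.div_lt_self hm hp.one_lt
    haveI : NeZero m₀ := ⟨hm0pos.ne'⟩
    have hdvd : m₀ ∣ m := Nat.div_dvd_of_dvd ⟨p * s, by rw [hs]; ring⟩
    set φ := ZMod.castHom hdvd (ZMod m₀) with hφ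
    obtain ⟨w, hw⟩ := (IH m₀ hm0lt hm0pos (x.map φ) (span_map_top φ x hx)).exists_right_inv
    set z : ZeroHom (ZMod m₀) (ZMod m) :=
      ⟨fun c => ((c.val : ℕ) : ZMod m), by simp [ZMod.val_zero]⟩ with hz
    set v := w.map z with hv
    have hvφ : v.map φ = w := by
      ext g
      simp only [hv, HahnSeries.map_coeff, hz, ZeroHom.coe_mk]
      rw [map_natCast, ZMod.natCast_zmod_val]
    set n := x * v - 1 with hn
    have hxv : x * v = 1 + n := by rw [hn]; ring
    have hmapmul : (x * v).map φ = (x.map φ) * (v.map φ) :=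
      HahnSeries.map_mul (φ : ZMod m →ₙ+* ZMod m₀)
    have h0 : ∀ g : ℤ, φ (n.coeff g) = 0 := by
      intro g
      have h1 : φ (n.coeff g)
          = ((x * v).map φ).coeff g - φ ((1 : HahnSeries ℤ (ZMod m)).coeff g) := by
        simp [hn, HahnSeries.coeff_sub, map_sub, HahnSeries.map_coeff]
      rw [h1, hmapmul, hvφ, hw]
      by_cases hg : g = 0 <;> simp [HahnSeries.coeff_one, hg]
    have hcoeff : ∀ g : ℤ, ((m₀ : ℕ) : ZMod m) ∣ n.coeff g := by
      intro g
      have h2 := h0 g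
      rw [ZMod.castHom_apply, ← ZMod.natCast_val,
        ZMod.natCast_eq_zero_iff] at h2
      obtain ⟨t, ht⟩ := h2
      refine ⟨(t : ZMod m), ?_⟩
      rw [← ZMod.natCast_zmod_val (n.coeff g), ht]
      push_cast
      ring
    have haa : ((m₀ : ℕ) : ZMod m) * ((m₀ : ℕ) : ZMod m) = 0 := by
      rw [← Nat.cast_mul, ZMod.natCast_eq_zero_iff]
      exact ⟨s, by rw [hps, hs]; ring⟩
    have hn2 : n * n = 0 := sq_zero haa n hcoeff
    refine IsUnit.of_mul_eq_one (v * (1 - n)) ?_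
    calc x * (v * (1 - n)) = (x * v) * (1 - n) := by ring
      _ = (1 + n) * (1 - n) := by rw [hxv]
      _ = 1 - n * n := by ring
      _ = 1 := by rw [hn2, sub_zero]
  · -- m squarefree composite: split with coprime factors
    push_neg at hsqf
    set p := m.minFac with hpdef
    have hp : p.Prime := Nat.minFac_prime hm1
    have hpm : p ∣ m := Nat.minFac_dvd m
    set b := m / p with hbdef
    have hmab : m = p * b := (Nat.mul_div_cancel' hpm).symm
    have hb1 : b ≠ 1 := by
      intro h
      rw [h, mul_one] at hmab
      exact hprime (hmab ▸ hp)
    have hb0 : 0 < b := by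
      rcases Nat.eq_zero_or_pos b with h | h
      · rw [h, mul_zero] at hmab; omega
      · exact h
    have hb2 : 2 ≤ b := by omega
    have hco : Nat.Coprime p b := (hp.coprime_iff_not_dvd).mpr (fun hdvd =>
      hsqf p hp (by rw [hmab]; exact Nat.mul_dvd_mul_left p hdvd))
    have hblt : b < m := Nat.div_lt_self hm hp.one_lt
    have hplt : p < m := by
      rw [hmab]
      nlinarith [hp.pos]
    haveI : NeZero p := ⟨hp.pos.ne'⟩
    haveI : NeZero b := ⟨hb0.ne'⟩
    obtain ⟨u, v, huv⟩ := Nat.isCoprime_iff_coprime.mpr hco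
    -- huv : u * p + v * b = 1
    set e₁ : ZMod m := ((v : ℤ) : ZMod m) * ((b : ℕ) : ZMod m) with he₁def
    set e₂ : ZMod m := ((u : ℤ) : ZMod m) * ((p : ℕ) : ZMod m) with he₂def
    have hpb0 : ((p : ℕ) : ZMod m) * ((b : ℕ) : ZMod m) = 0 := by
      rw [← Nat.cast_mul, ZMod.natCast_eq_zero_iff, ← hmab]
    have hsum : e₁ + e₂ = 1 := by
      have h1 : ((u * p + v * b : ℤ) : ZMod m) = 1 := by rw [huv]; norm_cast
      rw [he₁def, he₂def]
      push_cast at h1 ⊢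
      linear_combination h1
    have h12 : e₁ * e₂ = 0 := by
      rw [he₁def, he₂def]
      calc ((v:ℤ) : ZMod m) * ((b:ℕ) : ZMod m) * (((u:ℤ) : ZMod m) * ((p:ℕ) : ZMod m))
          = ((v:ℤ):ZMod m) * ((u:ℤ):ZMod m) * (((p:ℕ):ZMod m) * ((b:ℕ):ZMod m)) := by ring
        _ = 0 := by rw [hpb0, mul_zero]
    have h21 : e₂ * e₁ = 0 := by rw [mul_comm]; exact h12
    have he₁ : e₁ * e₁ = e₁ := by
      calc e₁ * e₁ = e₁ * (e₁ + e₂) - e₁ * e₂ := by ring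
        _ = e₁ := by rw [hsum, h12, mul_one, sub_zero]
    have he₂ : e₂ * e₂ = e₂ := by
      calc e₂ * e₂ = e₂ * (e₁ + e₂) - e₂ * e₁ := by ring
        _ = e₂ := by rw [hsum, h21, mul_one, sub_zero]
    have hea₁ : e₁ * ((p : ℕ) : ZMod m) = 0 := by
      rw [he₁def]
      calc ((v:ℤ) : ZMod m) * ((b:ℕ) : ZMod m) * ((p:ℕ) : ZMod m)
          = ((v:ℤ):ZMod m) * (((p:ℕ):ZMod m) * ((b:ℕ):ZMod m)) := by ring
        _ = 0 := by rw [hpb0, mul_zero]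
    have hea₂ : e₂ * ((b : ℕ) : ZMod m) = 0 := by
      rw [he₂def]
      calc ((u:ℤ) : ZMod m) * ((p:ℕ) : ZMod m) * ((b:ℕ) : ZMod m)
          = ((u:ℤ):ZMod m) * (((p:ℕ):ZMod m) * ((b:ℕ):ZMod m)) := by ring
        _ = 0 := by rw [hpb0, mul_zero]
    have hpdvd : p ∣ m := hpm
    have hbdvd : b ∣ m := ⟨p, by rw [hmab]; ring⟩
    set φ₁ := ZMod.castHom hpdvd (ZMod p) with hφ₁
    set φ₂ := ZMod.castHom hbdvd (ZMod b) with hφ₂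
    obtain ⟨w₁, hw₁⟩ :=
      (IH p hplt hp.pos (x.map φ₁) (span_map_top φ₁ x hx)).exists_right_inv
    obtain ⟨w₂, hw₂⟩ :=
      (IH b hblt hb0 (x.map φ₂) (span_map_top φ₂ x hx)).exists_right_inv
    set f₁ := sec m p e₁ he₁ hea₁ with hf₁
    set f₂ := sec m b e₂ he₂ hea₂ with hf₂
    refine IsUnit.of_mul_eq_one (w₁.map f₁ + w₂.map f₂) ?_
    have hterm₁ : x * (w₁.map f₁) = HahnSeries.single 0 e₁ := by
      calc x * (w₁.map f₁) = x * (HahnSeries.single 0 e₁ * w₁.map f₁) := by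
            rw [sec_idem_mul]
        _ = (HahnSeries.single 0 e₁ * x) * (w₁.map f₁) := by ring
        _ = ((x.map φ₁).map f₁) * (w₁.map f₁) := by rw [sec_map_cast]
        _ = ((x.map φ₁) * w₁).map f₁ := (HahnSeries.map_mul f₁).symm
        _ = (1 : HahnSeries ℤ (ZMod p)).map f₁ := by rw [hw₁]
        _ = HahnSeries.single 0 e₁ := sec_map_one hp.one_lt e₁ he₁ hea₁
    have hterm₂ : x * (w₂.map f₂) = HahnSeries.single 0 e₂ := by
      calc x * (w₂.map f₂) = x * (HahnSeries.single 0 e₂ * w₂.map f₂) := by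
            rw [sec_idem_mul]
        _ = (HahnSeries.single 0 e₂ * x) * (w₂.map f₂) := by ring
        _ = ((x.map φ₂).map f₂) * (w₂.map f₂) := by rw [sec_map_cast]
        _ = ((x.map φ₂) * w₂).map f₂ := (HahnSeries.map_mul f₂).symm
        _ = (1 : HahnSeries ℤ (ZMod b)).map f₂ := by rw [hw₂]
        _ = HahnSeries.single 0 e₂ := sec_map_one (by omega) e₂ he₂ hea₂
    rw [mul_add, hterm₁, hterm₂]
    ext g
    by_cases hg : g = 0 <;>
      simp [hg, HahnSeries.coeff_one, HahnSeries.coeff_single, hsum]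

end LaurentNZD

/-- A Laurent polynomial over `ℤ_d`, realized inside the formal Laurent series ring
`ℤ_d((y))` as a finitely supported series `r`: if `r` is a non-zero-divisor among
Laurent polynomials (`r·s = 0 ⇒ s = 0` for finitely supported `s`), then the ideal
of `ℤ_d` generated by the coefficients of `r` is all of `ℤ_d`, and consequently `r`
is a unit of `ℤ_d((y))`. -/
theorem laurentPolynomial_nonZeroDivisor_isUnit (d : ℕ) (hd : 0 < d)
    (r : LaurentSeries (ZMod d)) (hfin : r.support.Finite)
    (hnzd : ∀ s : LaurentSeries (ZMod d), s.support.Finite → r * s = 0 → s = 0) :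
    Ideal.span {c : ZMod d | ∃ i : ℤ, r.coeff i = c} = ⊤ ∧ IsUnit r := by
  haveI : NeZero d := ⟨hd.ne'⟩
  have hspan : Ideal.span {c : ZMod d | ∃ i : ℤ, r.coeff i = c} = ⊤ := by
    by_contra hI
    set I := Ideal.span {c : ZMod d | ∃ i : ℤ, r.coeff i = c} with hIdef
    set J := I.comap (Int.castRingHom (ZMod d)) with hJdef
    obtain ⟨g, hg⟩ := (IsPrincipalIdealRing.principal J).principal
    have hdJ : (d : ℤ) ∈ J := by
      rw [hJdef]
      simp only [Ideal.mem_comap, map_natCast]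
      rw [ZMod.natCast_self]
      exact I.zero_mem
    have hgd : g ∣ (d : ℤ) := by
      rw [hg] at hdJ
      exact Ideal.mem_span_singleton.mp hdJ
    have hgu : ¬ IsUnit g := by
      intro h
      have : J = ⊤ := by rw [hg]; exact Ideal.span_singleton_eq_top.mpr h
      have h1 : (1 : ZMod d) ∈ I := by
        have : (1 : ℤ) ∈ J := this ▸ Submodule.mem_top
        simpa using (hJdef ▸ this : (1:ℤ) ∈ I.comap (Int.castRingHom (ZMod d)))
      exact hI (I.eq_top_of_isUnit_mem h1 isUnit_one)
    obtain ⟨q, hq⟩ := hgd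
    have hg0 : g ≠ 0 := by
      rintro rfl
      rw [zero_mul] at hq
      exact_mod_cast absurd hq (by positivity)
    have hq0 : q ≠ 0 := by
      rintro rfl
      rw [mul_zero] at hq
      exact_mod_cast absurd hq (by positivity)
    set e : ZMod d := ((q : ℤ) : ZMod d) with hedef
    have he : e ≠ 0 := by
      intro h
      rw [hedef, ZMod.intCast_zmod_eq_zero_iff_dvd] at h
      have hqd : q ∣ (d : ℤ) := ⟨g, by rw [hq]; ring⟩
      have hnatabs : q.natAbs = (d : ℤ).natAbs :=
        Nat.dvd_antisymm (Int.natAbs_dvd_natAbs.mpr hqd) (Int.natAbs_dvd_natAbs.mpr h)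
      have habs : (d : ℤ).natAbs = g.natAbs * q.natAbs := by
        rw [hq, Int.natAbs_mul]
      rw [hnatabs] at habs
      have hd0 : (d : ℤ).natAbs ≠ 0 := by simp; omega
      have : g.natAbs = 1 := Nat.eq_of_mul_eq_mul_right (Nat.pos_of_ne_zero hd0)
        (by rw [one_mul]; exact habs.symm)
      exact hgu (Int.isUnit_iff_natAbs_eq.mpr this)
    have hrs : r * HahnSeries.single 0 e = 0 := by
      ext i
      rw [HahnSeries.coeff_mul_single_zero, HahnSeries.coeff_zero]
      set c := r.coeff i with hc
      have hcI : c ∈ I := Ideal.subset_span ⟨i, rfl⟩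
      have hzJ : ((c.val : ℕ) : ℤ) ∈ J := by
        rw [hJdef]
        simp only [Ideal.mem_comap]
        rw [map_natCast, ZMod.natCast_zmod_val]
        exact hcI
      rw [hg] at hzJ
      obtain ⟨t, ht⟩ := Ideal.mem_span_singleton.mp hzJ
      have : c * e = (((c.val : ℕ) * q : ℤ) : ZMod d) := by
        rw [hedef]
        push_cast [ZMod.natCast_zmod_val]
        ring
      rw [this, ht]
      have : g * t * q = (d : ℤ) * t := by rw [hq]; ring
      rw [this]
      push_cast
      rw [ZMod.natCast_self, zero_mul]
    have hsupp : (HahnSeries.single (0:ℤ) e).support.Finite :=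
      Set.Finite.subset (Set.finite_singleton 0) HahnSeries.support_single_subset
    have := hnzd _ hsupp hrs
    rw [HahnSeries.single_eq_zero_iff] at this
    exact he this
  exact ⟨hspan, LaurentNZD.zmod_unit d hd r hspan⟩
end
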